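/- (Mean-shift pullback recovers the projected KDE value; core of the proof of Theorem 3.2.) Let n ≥ 1, d, m ≥ 1, let p₁,…,pₙ ∈ ℝ^d, let q₁,…,qₙ ∈ ℝ^m, and let x ∈ ℝ^m. Suppose there exists y ∈ ℝ^d such that ‖y − pᵢ‖ ≤ ‖x − qᵢ‖ for every i. Define x' = (Σ_{i=1}^n pᵢ · exp(−‖x−qᵢ‖²)) / (Σ_{i=1}^n exp(−‖x−qᵢ‖²)). Then Σ_{i=1}^n exp(−‖x'−pᵢ‖²) ≥ Σ_{i=1}^n exp(−‖x−qᵢ‖²). -/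

import Mathlib

open scoped BigOperators

theorem stmt_8 (n d m : ℕ) (hn : 1 ≤ n) (hd : 1 ≤ d) (hm : 1 ≤ m)
    (p : Fin n → EuclideanSpace ℝ (Fin d)) (q : Fin n → EuclideanSpace ℝ (Fin m))
    (x : EuclideanSpace ℝ (Fin m))
    (hy : ∃ y : EuclideanSpace ℝ (Fin d), ∀ i, ‖y - p i‖ ≤ ‖x - q i‖)
    (x' : EuclideanSpace ℝ (Fin d))
    (hx' : x' = (∑ i, Real.exp (-‖x - q i‖ ^ 2))⁻¹ •
      ∑ i, Real.exp (-‖x - q i‖ ^ 2) • p i) :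
    ∑ i, Real.exp (-‖x' - p i‖ ^ 2) ≥ ∑ i, Real.exp (-‖x - q i‖ ^ 2) := by
  obtain ⟨y, hy⟩ := hy
  set w : Fin n → ℝ := fun i => Real.exp (-‖x - q i‖ ^ 2) with hw
  have hwpos : ∀ i, 0 < w i := fun i => Real.exp_pos _
  have hWpos : 0 < ∑ i, w i :=
    Finset.sum_pos (fun i _ => hwpos i) ⟨⟨0, hn⟩, Finset.mem_univ _⟩
  set W : ℝ := ∑ i, w i with hW
  have hS : (∑ i, w i • p i) = W • x' := by
    rw [hx', smul_smul, mul_inv_cancel₀ hWpos.ne', one_smul]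
  -- weighted sum of squares expansion
  have expand : ∀ z : EuclideanSpace ℝ (Fin d),
      ∑ i, w i * ‖z - p i‖ ^ 2
        = W * ‖z‖ ^ 2 - 2 * W * (inner ℝ z x' : ℝ) + ∑ i, w i * ‖p i‖ ^ 2 := by
    intro z
    have h1 : ∀ i : Fin n, w i * ‖z - p i‖ ^ 2
        = w i * ‖z‖ ^ 2 - 2 * (w i * (inner ℝ z (p i) : ℝ)) + w i * ‖p i‖ ^ 2 := by
      intro i
      rw [norm_sub_sq_real]
      ring
    rw [Finset.sum_congr rfl (fun i _ => h1 i)]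
    rw [Finset.sum_add_distrib, Finset.sum_sub_distrib, ← Finset.sum_mul,
      ← Finset.mul_sum]
    have h2 : ∑ i, w i * (inner ℝ z (p i) : ℝ) = W * (inner ℝ z x' : ℝ) := by
      have : ∑ i, w i * (inner ℝ z (p i) : ℝ) = (inner ℝ z (∑ i, w i • p i) : ℝ) := by
        rw [inner_sum]
        exact Finset.sum_congr rfl fun i _ => (real_inner_smul_right _ _ _).symm
      rw [this, hS, real_inner_smul_right]
    rw [h2]
    ring
  have h1 : ∑ i, w i * ‖x' - p i‖ ^ 2 ≤ ∑ i, w i * ‖y - p i‖ ^ 2 := by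
    have e1 := expand x'
    have e2 := expand y
    have hyx : ∑ i, w i * ‖y - p i‖ ^ 2 - ∑ i, w i * ‖x' - p i‖ ^ 2
        = W * ‖y - x'‖ ^ 2 := by
      rw [e1, e2, norm_sub_sq_real, real_inner_self_eq_norm_sq]
      ring
    nlinarith [mul_nonneg hWpos.le (sq_nonneg ‖y - x'‖)]
  have h2 : ∑ i, w i * ‖y - p i‖ ^ 2 ≤ ∑ i, w i * ‖x - q i‖ ^ 2 := by
    refine Finset.sum_le_sum fun i _ => mul_le_mul_of_nonneg_left ?_ (hwpos i).le
    have := hy i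
    nlinarith [norm_nonneg (y - p i), norm_nonneg (x - q i)]
  have key : ∑ i, w i * ‖x' - p i‖ ^ 2 ≤ ∑ i, w i * ‖x - q i‖ ^ 2 := le_trans h1 h2
  have conv : ∀ i : Fin n,
      w i + (w i * ‖x - q i‖ ^ 2 - w i * ‖x' - p i‖ ^ 2)
        ≤ Real.exp (-‖x' - p i‖ ^ 2) := by
    intro i
    have h := Real.add_one_le_exp (‖x - q i‖ ^ 2 - ‖x' - p i‖ ^ 2)
    have h' := mul_le_mul_of_nonneg_left h (hwpos i).le
    have heq : w i * Real.exp (‖x - q i‖ ^ 2 - ‖x' - p i‖ ^ 2)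
        = Real.exp (-‖x' - p i‖ ^ 2) := by
      rw [hw, ← Real.exp_add]
      ring_nf
    rw [heq] at h'
    nlinarith [h']
  calc ∑ i, Real.exp (-‖x' - p i‖ ^ 2)
      ≥ ∑ i, (w i + (w i * ‖x - q i‖ ^ 2 - w i * ‖x' - p i‖ ^ 2)) :=
        Finset.sum_le_sum fun i _ => conv i
    _ = W + (∑ i, w i * ‖x - q i‖ ^ 2 - ∑ i, w i * ‖x' - p i‖ ^ 2) := by
        rw [Finset.sum_add_distrib, Finset.sum_sub_distrib]
    _ ≥ W := by linarith
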